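/- Let B be an oriented incidence matrix of a connected graph with diagonal weight matrix W having strictly positive entries, set L = B·W·Bᵀ with Moore–Penrose pseudoinverse L†, and let u ≠ v be the endpoints of some edge of the graph. Let R_uv = (e_u − e_v)ᵀ·L†·(e_u − e_v) be the effective resistance between u and v. Then for every δ ∈ ℝ, the perturbed Laplacian L(δ) = L + δ·(e_u − e_v)·(e_u − e_v)ᵀ is positive semidefinite if and only if δ ≥ −1/R_uv. In particular, L(δ) is positive semidefinite for all δ with |δ| < 1/R_uv, and this margin is exact. -/

import Mathlib

open Matrix

/-- `B` is an oriented incidence matrix: every column has exactly one `1`,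
exactly one `-1`, and zeros elsewhere. -/
def IsIncidenceMatrix {V E : Type*} (B : Matrix V E ℝ) : Prop :=
  ∀ e : E, ∃ i j : V, i ≠ j ∧ B i e = 1 ∧ B j e = -1 ∧
    ∀ k : V, k ≠ i → k ≠ j → B k e = 0

/-- for an edge `{u,v}` of a connected positively weighted graph,
`L + δ·(e_u − e_v)·(e_u − e_v)ᵀ` is positive semidefinite iff `δ ≥ −1/R_uv`;
in particular it is positive semidefinite whenever `|δ| < 1/R_uv`, and this margin
is exact. -/
theorem single_edge_perturbation_margin
    {V E : Type*} [Fintype V] [Fintype E]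
    [DecidableEq V] [DecidableEq E] [Nonempty V]
    (B : Matrix V E ℝ) (hB : IsIncidenceMatrix B)
    (w : E → ℝ) (hw : ∀ e, 0 < w e)
    -- the graph is connected
    (hConn : LinearMap.ker Bᵀ.mulVecLin = Submodule.span ℝ {(fun _ : V => (1 : ℝ))})
    -- `Ld` is the Moore–Penrose pseudoinverse of `L = B·W·Bᵀ`
    (Ld : Matrix V V ℝ)
    (hp1 : (B * Matrix.diagonal w * Bᵀ) * Ld * (B * Matrix.diagonal w * Bᵀ) =
      B * Matrix.diagonal w * Bᵀ)
    (hp2 : Ld * (B * Matrix.diagonal w * Bᵀ) * Ld = Ld)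
    (hp3 : ((B * Matrix.diagonal w * Bᵀ) * Ld)ᵀ = (B * Matrix.diagonal w * Bᵀ) * Ld)
    (hp4 : (Ld * (B * Matrix.diagonal w * Bᵀ))ᵀ = Ld * (B * Matrix.diagonal w * Bᵀ))
    (u v : V) (huv : u ≠ v)
    -- `u` and `v` are the endpoints of some edge
    (hedge : ∃ e : E, B u e = 1 ∧ B v e = -1) :
    let Ruv : ℝ :=
      (Pi.single u 1 - Pi.single v 1) ⬝ᵥ Ld.mulVec (Pi.single u 1 - Pi.single v 1)
    (∀ δ : ℝ,
      (B * Matrix.diagonal w * Bᵀ +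
          δ • Matrix.vecMulVec (Pi.single u 1 - Pi.single v 1)
            (Pi.single u 1 - Pi.single v 1)).PosSemidef ↔ -(1 / Ruv) ≤ δ) ∧
    (∀ δ : ℝ, |δ| < 1 / Ruv →
      (B * Matrix.diagonal w * Bᵀ +
          δ • Matrix.vecMulVec (Pi.single u 1 - Pi.single v 1)
            (Pi.single u 1 - Pi.single v 1)).PosSemidef) := by
  intro Ruv
  have hRuv : Ruv = (Pi.single u 1 - Pi.single v 1) ⬝ᵥ
      Ld.mulVec (Pi.single u 1 - Pi.single v 1) := rfl
  clear_value Ruv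
  set L : Matrix V V ℝ := B * Matrix.diagonal w * Bᵀ with hLdef
  set x : V → ℝ := Pi.single u 1 - Pi.single v 1 with hxdef
  set z : V → ℝ := Ld *ᵥ x with hzdef
  -- basic symmetry
  have hLsym : Lᵀ = L := by
    rw [hLdef, Matrix.transpose_mul, Matrix.transpose_mul, Matrix.transpose_transpose,
      Matrix.diagonal_transpose, Matrix.mul_assoc]
  have hHerm : L.IsHermitian := by
    rw [Matrix.IsHermitian, Matrix.conjTranspose_eq_transpose_of_trivial]
    exact hLsym
  -- quadratic form
  have hquad : ∀ y : V → ℝ, y ⬝ᵥ (L *ᵥ y) =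
      ∑ e, w e * ((Bᵀ *ᵥ y) e * (Bᵀ *ᵥ y) e) := by
    intro y
    rw [hLdef, Matrix.mul_assoc, ← Matrix.mulVec_mulVec, Matrix.dotProduct_mulVec,
      ← Matrix.mulVec_transpose, ← Matrix.mulVec_mulVec]
    simp only [dotProduct, Matrix.mulVec_diagonal]
    exact Finset.sum_congr rfl fun e _ => by ring
  have hpsd : L.PosSemidef := by
    refine Matrix.PosSemidef.of_dotProduct_mulVec_nonneg hHerm fun y => ?_
    rw [star_trivial, hquad]
    exact Finset.sum_nonneg fun e _ => mul_nonneg (hw e).le (mul_self_nonneg _)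
  -- kernel facts
  have hBker : ∀ y : V → ℝ, Bᵀ *ᵥ y = 0 ↔ ∃ c : ℝ, y = fun _ => c := by
    intro y
    constructor
    · intro h
      have hy : y ∈ LinearMap.ker Bᵀ.mulVecLin :=
        LinearMap.mem_ker.mpr (by rw [Matrix.mulVecLin_apply]; exact h)
      rw [hConn, Submodule.mem_span_singleton] at hy
      obtain ⟨c, hc⟩ := hy
      exact ⟨c, by rw [← hc]; funext i; simp⟩
    · rintro ⟨c, rfl⟩
      have hy : (fun _ : V => c) ∈ Submodule.span ℝ {(fun _ : V => (1 : ℝ))} := by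
        rw [Submodule.mem_span_singleton]
        exact ⟨c, by funext i; simp⟩
      rw [← hConn] at hy
      have := LinearMap.mem_ker.mp hy
      rwa [Matrix.mulVecLin_apply] at this
  have hBone : Bᵀ *ᵥ (fun _ : V => (1 : ℝ)) = 0 := (hBker _).2 ⟨1, rfl⟩
  have hLofB : ∀ y : V → ℝ, Bᵀ *ᵥ y = 0 → L *ᵥ y = 0 := by
    intro y hy
    rw [hLdef, Matrix.mul_assoc, ← Matrix.mulVec_mulVec, ← Matrix.mulVec_mulVec, hy]
    simp
  have hLone : L *ᵥ (fun _ : V => (1 : ℝ)) = 0 := hLofB _ hBone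
  have hBzero : ∀ y : V → ℝ, y ⬝ᵥ (L *ᵥ y) = 0 → Bᵀ *ᵥ y = 0 := by
    intro y h
    rw [hquad y] at h
    have hterm : ∀ e ∈ Finset.univ, (0:ℝ) ≤ w e * ((Bᵀ *ᵥ y) e * (Bᵀ *ᵥ y) e) :=
      fun e _ => mul_nonneg (hw e).le (mul_self_nonneg _)
    have hall := (Finset.sum_eq_zero_iff_of_nonneg hterm).1 h
    funext e
    have he := hall e (Finset.mem_univ e)
    exact mul_self_eq_zero.mp ((mul_eq_zero.mp he).resolve_left (hw e).ne')
  -- Penrose consequence : L * (L * Ld) = L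
  have hQ : L * (L * Ld) = L := by
    calc L * (L * Ld) = Lᵀ * (L * Ld)ᵀ := by rw [hLsym, hp3]
    _ = ((L * Ld) * L)ᵀ := (Matrix.transpose_mul _ _).symm
    _ = Lᵀ := by rw [hp1]
    _ = L := hLsym
  -- x is orthogonal to the all-ones vector
  have honx : (fun _ : V => (1 : ℝ)) ⬝ᵥ x = 0 := by
    simp [hxdef, dotProduct, Pi.sub_apply, Finset.sum_sub_distrib,
      Pi.single_apply, huv.symm]
  have hxu : x u = 1 := by
    simp [hxdef, Pi.single_eq_of_ne huv]
  -- projection : L z = x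
  have hr0 : L *ᵥ (x - (L * Ld) *ᵥ x) = 0 := by
    rw [Matrix.mulVec_sub, Matrix.mulVec_mulVec, hQ, sub_self]
  obtain ⟨c, hc⟩ := (hBker _).1 (hBzero _ (by rw [hr0, dotProduct_zero]))
  have h1L : (fun _ : V => (1 : ℝ)) ᵥ* L = 0 := by
    rw [← Matrix.mulVec_transpose, hLsym, hLone]
  have h1Q : (fun _ : V => (1 : ℝ)) ⬝ᵥ ((L * Ld) *ᵥ x) = 0 := by
    rw [Matrix.dotProduct_mulVec, ← Matrix.vecMul_vecMul, h1L, Matrix.zero_vecMul,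
      zero_dotProduct]
  have hczero : c * (Fintype.card V : ℝ) = 0 := by
    have h1 : (fun _ : V => (1 : ℝ)) ⬝ᵥ (x - (L * Ld) *ᵥ x) = 0 := by
      rw [dotProduct_sub, honx, h1Q, sub_zero]
    rw [hc] at h1
    simpa [dotProduct, mul_comm] using h1
  have hc0 : c = 0 := by
    have hcard : (0:ℝ) < (Fintype.card V : ℝ) := by
      exact_mod_cast Fintype.card_pos
    exact (mul_eq_zero.mp hczero).resolve_right hcard.ne'
  have hLz : L *ᵥ z = x := by
    have : x - (L * Ld) *ᵥ x = 0 := by rw [hc, hc0]; funext i; simp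
    have h2 : (L * Ld) *ᵥ x = x := by
      have := sub_eq_zero.mp this; exact this.symm
    rw [hzdef, Matrix.mulVec_mulVec, h2]
  -- R facts
  have hRz : Ruv = x ⬝ᵥ z := hRuv
  have hzLz : z ⬝ᵥ (L *ᵥ z) = Ruv := by
    rw [hLz, dotProduct_comm, hRz]
  have hRpos : 0 < Ruv := by
    rcases lt_or_eq_of_le (by simpa [star_trivial, hzLz] using hpsd.dotProduct_mulVec_nonneg z : (0:ℝ) ≤ Ruv) with h | h
    · exact h
    · exfalso
      have h2 : L *ᵥ z = 0 := hLofB _ (hBzero _ (by rw [hzLz, ← h]))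
      rw [hLz] at h2
      have : x u = 0 := by rw [h2]; rfl
      rw [hxu] at this
      norm_num at this
  -- key inequality
  have hsymdot : ∀ y : V → ℝ, z ⬝ᵥ (L *ᵥ y) = x ⬝ᵥ y := by
    intro y
    rw [Matrix.dotProduct_mulVec, ← Matrix.mulVec_transpose, hLsym, hLz]
  have hkey : ∀ y : V → ℝ, (x ⬝ᵥ y) * (x ⬝ᵥ y) ≤ Ruv * (y ⬝ᵥ (L *ᵥ y)) := by
    intro y
    have h0 : 0 ≤ (Ruv • y - (x ⬝ᵥ y) • z) ⬝ᵥ (L *ᵥ (Ruv • y - (x ⬝ᵥ y) • z)) := by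
      simpa [star_trivial] using hpsd.dotProduct_mulVec_nonneg (Ruv • y - (x ⬝ᵥ y) • z)
    have hexp : (Ruv • y - (x ⬝ᵥ y) • z) ⬝ᵥ (L *ᵥ (Ruv • y - (x ⬝ᵥ y) • z)) =
        Ruv * (Ruv * (y ⬝ᵥ (L *ᵥ y)) - (x ⬝ᵥ y) * (x ⬝ᵥ y)) := by
      rw [Matrix.mulVec_sub, Matrix.mulVec_smul, Matrix.mulVec_smul, hLz,
        sub_dotProduct, dotProduct_sub, dotProduct_sub,
        smul_dotProduct, smul_dotProduct, smul_dotProduct,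
        smul_dotProduct, dotProduct_smul, dotProduct_smul,
        dotProduct_smul, dotProduct_smul, hsymdot y,
        dotProduct_comm y x, dotProduct_comm z x, ← hRz]
      simp only [smul_eq_mul]
      ring
    rw [hexp] at h0
    nlinarith [hRpos]
  -- quadratic form of perturbed matrix
  have hvmv : ∀ y : V → ℝ, (Matrix.vecMulVec x x) *ᵥ y = (x ⬝ᵥ y) • x := by
    intro y
    funext i
    show ∑ j, Matrix.vecMulVec x x i j * y j = (x ⬝ᵥ y) * x i
    simp only [Matrix.vecMulVec_apply]
    rw [dotProduct, Finset.sum_mul]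
    exact Finset.sum_congr rfl fun j _ => by ring
  have hqform : ∀ (δ : ℝ) (y : V → ℝ),
      y ⬝ᵥ ((L + δ • Matrix.vecMulVec x x) *ᵥ y)
        = y ⬝ᵥ (L *ᵥ y) + δ * ((x ⬝ᵥ y) * (x ⬝ᵥ y)) := by
    intro δ y
    rw [Matrix.add_mulVec, dotProduct_add, Matrix.smul_mulVec, hvmv,
      dotProduct_smul, dotProduct_smul, dotProduct_comm y x]
    simp only [smul_eq_mul]
  have hherm' : ∀ δ : ℝ, (L + δ • Matrix.vecMulVec x x).IsHermitian := by
    intro δ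
    refine hHerm.add ?_
    rw [Matrix.IsHermitian, Matrix.conjTranspose_eq_transpose_of_trivial]
    funext i j
    simp [Matrix.transpose_apply, Matrix.vecMulVec_apply, mul_comm]
  -- main implications
  have main : ∀ δ : ℝ, -(1 / Ruv) ≤ δ → (L + δ • Matrix.vecMulVec x x).PosSemidef := by
    intro δ hδ
    refine Matrix.PosSemidef.of_dotProduct_mulVec_nonneg (hherm' δ) fun y => ?_
    rw [star_trivial, hqform]
    have hk := hkey y
    have hq0 : 0 ≤ y ⬝ᵥ (L *ᵥ y) := by simpa [star_trivial] using hpsd.dotProduct_mulVec_nonneg y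
    have hδR : -1 ≤ δ * Ruv := by
      have h2 := mul_le_mul_of_nonneg_right hδ hRpos.le
      have h3 : -(1 / Ruv) * Ruv = -1 := by field_simp
      linarith
    nlinarith [mul_le_mul_of_nonneg_right hδR (mul_self_nonneg (x ⬝ᵥ y)), hk, hq0, hRpos]
  have conv : ∀ δ : ℝ, (L + δ • Matrix.vecMulVec x x).PosSemidef → -(1 / Ruv) ≤ δ := by
    intro δ hps
    have h := hps.dotProduct_mulVec_nonneg z
    rw [star_trivial, hqform, hzLz, ← hRz] at h
    rw [← neg_div, div_le_iff₀ hRpos]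
    nlinarith [hRpos]
  exact ⟨fun δ => ⟨conv δ, main δ⟩, fun δ hδ => main δ (le_of_lt (abs_lt.mp hδ).1)⟩
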